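/- Let d ≥ 1, let σ > 0, let ε ≥ 0, and let a* ∈ ℝ^d with a* ≠ 0. Define g : ℝ^d → ℝ by g(a) := det((1/σ²)(2aaᵀ + 2ε²I) + I)^{-1/2} + det((1/σ²)(2a*a*ᵀ + 2ε²I) + I)^{-1/2} − 2 det((1/σ²)(aaᵀ + a*a*ᵀ + 2ε²I) + I)^{-1/2}. Then a = 0 is a critical point of g (∇g(0) = 0) and a local maximum of g. -/

import Mathlib

open Matrix Real

lemma det_rank1 {d : ℕ} (r : ℝ) (u v : Fin d → ℝ) :
    ((1 : Matrix (Fin d) (Fin d) ℝ) + r • vecMulVec u v).det = 1 + r * (v ⬝ᵥ u) := by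
  have h : r • vecMulVec u v = replicateCol Unit (r • u) * replicateRow Unit v := by
    rw [← vecMulVec_eq Unit]
    ext i j
    simp [vecMulVec_apply, Pi.smul_apply, smul_eq_mul]
    ring
  rw [h, Matrix.det_one_add_replicateCol_mul_replicateRow]
  simp [dotProduct, Finset.mul_sum]
  ring_nf
  congr 1
  funext i
  ring

lemma det_rank2 {d : ℕ} (r : ℝ) (u v : Fin d → ℝ) :
    ((1 : Matrix (Fin d) (Fin d) ℝ) + r • (vecMulVec u u + vecMulVec v v)).det
      = (1 + r * (u ⬝ᵥ u)) * (1 + r * (v ⬝ᵥ v)) - (r * (u ⬝ᵥ v)) ^ 2 := by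
  set A : Matrix (Fin d) (Fin 2) ℝ := Matrix.of fun i j => if j = 0 then u i else v i with hA
  set B : Matrix (Fin 2) (Fin d) ℝ := Matrix.of fun j i => r * (if j = 0 then u i else v i) with hB
  have hAB : A * B = r • (vecMulVec u u + vecMulVec v v) := by
    ext i k
    simp [hA, hB, Matrix.mul_apply, Fin.sum_univ_two, vecMulVec_apply, Matrix.smul_apply,
      Matrix.add_apply]
    ring
  rw [← hAB, Matrix.det_one_add_mul_comm, Matrix.det_fin_two]
  simp [hA, hB, Matrix.mul_apply, Matrix.one_apply, Matrix.add_apply, dotProduct,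
    Finset.mul_sum]
  rw [← Finset.mul_sum]
  have key : ∀ w z : Fin d → ℝ, ∑ i, r * w i * z i = ∑ i, r * (w i * z i) := by
    intro w z; exact Finset.sum_congr rfl (fun i _ => by ring)
  have key2 : ∑ i, r * (v i * u i) = ∑ i, r * (u i * v i) :=
    Finset.sum_congr rfl (fun i _ => by ring)
  rw [key u u, key v v, key u v, key v u, key2]
  ring

lemma core_ineq (γ x : ℝ) (hγ0 : 0 < γ) (hγ1 : γ < 1) (hx0 : 0 ≤ x) (hxδ : x ≤ 1 - γ) :
    (Real.sqrt (1 + 2*x))⁻¹ - 2*γ*(Real.sqrt (1 + x))⁻¹ ≤ 1 - 2*γ := by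
  set u := Real.sqrt (1 + 2*x) with hu
  set v := Real.sqrt (1 + x) with hv
  have hu2 : u^2 = 1 + 2*x := Real.sq_sqrt (by linarith)
  have hv2 : v^2 = 1 + x := Real.sq_sqrt (by linarith)
  have hu1 : 1 ≤ u := by
    have h := Real.sqrt_le_sqrt (show (1:ℝ) ≤ 1 + 2*x by linarith)
    simpa [hu] using h
  have hv1 : 1 ≤ v := by
    have h := Real.sqrt_le_sqrt (show (1:ℝ) ≤ 1 + x by linarith)
    simpa [hv] using h
  have huu : u ≤ 1 + x := by
    rw [hu, show (1+x) = Real.sqrt ((1+x)^2) from (Real.sqrt_sq (by linarith)).symm]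
    exact Real.sqrt_le_sqrt (by nlinarith)
  have hu0 : (0:ℝ) < u := by linarith
  have hv0 : (0:ℝ) < v := by linarith
  have h1 : (u - 1) * (u + 1) = 2*x := by nlinarith [hu2]
  have h2 : (v - 1) * (v + 1) = x := by nlinarith [hv2]
  have h3 : γ * (u * (u+1)) ≤ 2 + x := by
    nlinarith [mul_le_mul_of_nonneg_left huu hγ0.le,
      mul_nonneg (by linarith : (0:ℝ) ≤ 1 - γ) hx0, hu2, hγ0.le]
  have h4 : 2 + x ≤ v * (v+1) := by nlinarith [hv2, hv1]
  have h5 : (0:ℝ) < (u+1)*(v+1) := by positivity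
  have h6 : (v*(u-1) - 2*γ*(u*(v-1))) * ((u+1)*(v+1))
      = 2*x*(v*(v+1)) - 2*γ*x*(u*(u+1)) := by
    linear_combination v*(v+1)*h1 - 2*γ*(u*(u+1))*h2
  have hT : 0 ≤ v*(u-1) - 2*γ*(u*(v-1)) := by
    nlinarith [h5, h6, mul_nonneg hx0 (by linarith : 0 ≤ v*(v+1) - γ*(u*(u+1)))]
  have key : v - 2*γ*u ≤ (1 - 2*γ)*(u*v) := by nlinarith [hT]
  have heq : u⁻¹ - 2*γ*v⁻¹ = (v - 2*γ*u)/(u*v) := by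
    field_simp
  rw [heq, div_le_iff₀ (mul_pos hu0 hv0)]
  linarith [key]

lemma rpow_neg_half' {X : ℝ} (hX : 0 ≤ X) : X ^ (-(1:ℝ)/2) = (Real.sqrt X)⁻¹ := by
  rw [neg_div, Real.rpow_neg hX, ← Real.sqrt_eq_rpow]

lemma dot_self_eq_norm_sq {d : ℕ} (a : EuclideanSpace ℝ (Fin d)) : a ⬝ᵥ a = ‖a‖^2 := by
  rw [EuclideanSpace.norm_eq, Real.sq_sqrt (by positivity)]
  simp [dotProduct, Real.norm_eq_abs, sq_abs, pow_two]

set_option maxHeartbeats 1000000 in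
theorem mmd_covariance_origin_local_max (d : ℕ) (hd : 1 ≤ d) (σ : ℝ) (hσ : 0 < σ)
    (ε : ℝ) (hε : 0 ≤ ε) (astar : EuclideanSpace ℝ (Fin d)) (hastar : astar ≠ 0)
    (g : EuclideanSpace ℝ (Fin d) → ℝ)
    (hg : g = fun a : EuclideanSpace ℝ (Fin d) =>
      (((1 / σ ^ 2) • ((2 : ℝ) • vecMulVec a a + (2 * ε ^ 2) • 1) + 1).det) ^ (-(1 : ℝ) / 2)
      + (((1 / σ ^ 2) • ((2 : ℝ) • vecMulVec astar astar + (2 * ε ^ 2) • 1) + 1).det) ^ (-(1 : ℝ) / 2)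
      - 2 * (((1 / σ ^ 2) • (vecMulVec a a + vecMulVec astar astar + (2 * ε ^ 2) • 1) + 1).det) ^ (-(1 : ℝ) / 2)) :
    gradient g 0 = 0 ∧ IsLocalMax g 0 := by
  have hσ2 : (0:ℝ) < σ^2 := by positivity
  have hden : (0:ℝ) < σ^2 + 2*ε^2 := by positivity
  set c : ℝ := 1 + 2*ε^2/σ^2 with hc_def
  have hc0 : (0:ℝ) < c := by positivity
  set α : ℝ := 1/(σ^2 + 2*ε^2) with hα_def
  have hα : 0 < α := by positivity
  have hcd : (0:ℝ) < c^d := by positivity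
  -- matrix identities
  have e1 : ∀ b : EuclideanSpace ℝ (Fin d),
      (1 / σ ^ 2) • ((2 : ℝ) • vecMulVec b b + (2 * ε ^ 2) • (1:Matrix (Fin d) (Fin d) ℝ)) + 1
        = c • ((1:Matrix (Fin d) (Fin d) ℝ) + (2*α) • vecMulVec b b) := by
    intro b
    ext i j
    by_cases hij : i = j <;>
      simp [Matrix.add_apply, Matrix.smul_apply, Matrix.one_apply, vecMulVec_apply, hij,
        smul_eq_mul, hc_def, hα_def] <;> field_simp <;> ring
  have e3 : ∀ b : EuclideanSpace ℝ (Fin d),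
      (1 / σ ^ 2) • (vecMulVec b b + vecMulVec astar astar + (2 * ε ^ 2) • (1:Matrix (Fin d) (Fin d) ℝ)) + 1
        = c • ((1:Matrix (Fin d) (Fin d) ℝ) + α • (vecMulVec b b + vecMulVec astar astar)) := by
    intro b
    ext i j
    by_cases hij : i = j <;>
      simp [Matrix.add_apply, Matrix.smul_apply, Matrix.one_apply, vecMulVec_apply, hij,
        smul_eq_mul, hc_def, hα_def] <;> field_simp <;> ring
  -- determinant values
  have D1 : ∀ b : EuclideanSpace ℝ (Fin d),
      ((1 / σ ^ 2) • ((2 : ℝ) • vecMulVec b b + (2 * ε ^ 2) • (1:Matrix (Fin d) (Fin d) ℝ)) + 1).det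
        = c^d * (1 + 2*α * (b ⬝ᵥ b)) := by
    intro b
    rw [e1 b, Matrix.det_smul, det_rank1]
    simp [Fintype.card_fin]
  have D3 : ∀ b : EuclideanSpace ℝ (Fin d),
      ((1 / σ ^ 2) • (vecMulVec b b + vecMulVec astar astar + (2 * ε ^ 2) • (1:Matrix (Fin d) (Fin d) ℝ)) + 1).det
        = c^d * ((1 + α * (b ⬝ᵥ b)) * (1 + α * (astar ⬝ᵥ astar)) - (α * (b ⬝ᵥ astar)) ^ 2) := by
    intro b
    rw [e3 b, Matrix.det_smul, det_rank2]
    simp [Fintype.card_fin]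
  set τ : ℝ := astar ⬝ᵥ astar with hτ_def
  have hτ0 : 0 < τ := by
    rw [hτ_def, dot_self_eq_norm_sq]
    have h := norm_pos_iff.mpr hastar
    positivity
  set B : ℝ := α * τ with hB_def
  have hB0 : 0 < B := by positivity
  set γ : ℝ := (Real.sqrt (1 + B))⁻¹ with hγ_def
  have hs1 : 1 < Real.sqrt (1 + B) := by
    have h := Real.sqrt_lt_sqrt (by norm_num : (0:ℝ) ≤ 1) (show (1:ℝ) < 1 + B by linarith)
    simpa using h
  have hγ0 : 0 < γ := inv_pos.2 (by linarith)
  have hγ1 : γ < 1 := by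
    rw [hγ_def]
    exact inv_lt_one_of_one_lt₀ hs1
  set ρ : ℝ := Real.sqrt ((1 - γ)/α) with hρ_def
  have hρ : 0 < ρ := Real.sqrt_pos.2 (div_pos (by linarith) hα)
  have h00 : (0 : EuclideanSpace ℝ (Fin d)) ⬝ᵥ (0 : EuclideanSpace ℝ (Fin d)) = 0 := by
    simp [dotProduct]
  have h0s : (0 : EuclideanSpace ℝ (Fin d)) ⬝ᵥ astar = 0 := by
    simp [dotProduct]
  set k : ℝ := (Real.sqrt (c^d))⁻¹ with hk_def
  have hk0 : 0 < k := inv_pos.2 (Real.sqrt_pos.2 hcd)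
  have conv : ∀ Y : ℝ, 0 ≤ Y → (c^d * Y) ^ (-(1:ℝ)/2) = k * (Real.sqrt Y)⁻¹ := by
    intro Y hY
    rw [rpow_neg_half' (by positivity), Real.sqrt_mul (by positivity), mul_inv, hk_def]
  -- value at 0
  have hg0 : g 0 = k + (c^d * (1 + 2*α*τ)) ^ (-(1:ℝ)/2) - 2 * (k * γ) := by
    simp only [hg]
    rw [D1 0, D1 astar, D3 0, h00, h0s, ← hτ_def]
    have r1 : (1:ℝ) + 2*α*0 = 1 := by ring
    have r2 : ((1:ℝ) + α * 0) * (1 + B) - (α * 0)^2 = 1 + B := by ring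
    rw [r1, r2, conv 1 (by norm_num), conv (1+B) (by positivity)]
    rw [hγ_def]
    simp
  -- the key pointwise bound
  have key : ∀ a : EuclideanSpace ℝ (Fin d), ‖a‖ < ρ → g a ≤ g 0 := by
    intro a ha
    have ht : a ⬝ᵥ a = ‖a‖^2 := dot_self_eq_norm_sq a
    have ht0 : 0 ≤ a ⬝ᵥ a := by rw [ht]; positivity
    set t : ℝ := a ⬝ᵥ a with ht_def
    set s : ℝ := a ⬝ᵥ astar with hs_def
    have hxδ : α * t ≤ 1 - γ := by
      have h1 : ‖a‖^2 < ρ^2 := by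
        rw [pow_two, pow_two]
        exact mul_self_lt_mul_self (norm_nonneg a) ha
      have h2 : ρ^2 = (1 - γ)/α := Real.sq_sqrt (le_of_lt (div_pos (by linarith) hα))
      rw [h2] at h1
      rw [ht]
      calc α * ‖a‖^2 ≤ α * ((1 - γ)/α) := mul_le_mul_of_nonneg_left h1.le hα.le
        _ = 1 - γ := by field_simp
    have hcs : s^2 ≤ t * τ := by
      have h := Finset.sum_mul_sq_le_sq_mul_sq Finset.univ (fun i => a i) (fun i => astar i)
      have e1' : s = ∑ i, a i * astar i := rfl
      have e2' : t = ∑ i, a i * a i := rfl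
      have e3' : τ = ∑ i, astar i * astar i := rfl
      rw [e1', e2', e3']
      calc (∑ i, a i * astar i)^2 ≤ (∑ i, (a i)^2) * (∑ i, (astar i)^2) := h
        _ = (∑ i, a i * a i) * (∑ i, astar i * astar i) := by
            congr 1 <;> exact Finset.sum_congr rfl (fun i _ => by ring)
    -- positivity of the third determinant factor
    have hY3 : 0 < (1 + α*t) * (1 + B) - (α*s)^2 := by
      rw [hB_def]
      nlinarith [hcs, mul_pos hα hα, sq_nonneg (α*s), hα, ht0, hτ0,
        mul_nonneg (mul_nonneg (mul_pos hα hα).le ht0) hτ0.le]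
    have hga : g a = k * (Real.sqrt (1 + 2*α*t))⁻¹ + (c^d * (1 + 2*α*τ)) ^ (-(1:ℝ)/2)
        - 2 * (k * (Real.sqrt ((1 + α*t) * (1 + B) - (α*s)^2))⁻¹) := by
      simp only [hg]
      rw [D1 a, D1 astar, D3 a, ← ht_def, ← hs_def, ← hτ_def]
      rw [conv _ (by nlinarith [hα, ht0] : (0:ℝ) ≤ 1 + 2*α*t), conv _ hY3.le]
    rw [hga, hg0]
    have main : (Real.sqrt (1 + 2*α*t))⁻¹ - 2 * (Real.sqrt ((1 + α*t) * (1 + B) - (α*s)^2))⁻¹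
        ≤ 1 - 2 * γ := by
      have hD : (1 + α*t) * (1 + B) - (α*s)^2 ≤ (1 + α*t) * (1 + B) := by
        nlinarith [sq_nonneg (α*s)]
      have step1 : (Real.sqrt ((1 + α*t) * (1 + B)))⁻¹
          ≤ (Real.sqrt ((1 + α*t) * (1 + B) - (α*s)^2))⁻¹ := by
        apply inv_anti₀ (Real.sqrt_pos.2 hY3)
        exact Real.sqrt_le_sqrt hD
      have hsplit : Real.sqrt ((1 + α*t) * (1 + B))
          = Real.sqrt (1 + α*t) * Real.sqrt (1 + B) :=
        Real.sqrt_mul (by positivity) _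
      have hcore := core_ineq γ (α*t) hγ0 hγ1 (by positivity) hxδ
      have e4 : (Real.sqrt ((1 + α*t) * (1 + B)))⁻¹ = (Real.sqrt (1 + α*t))⁻¹ * γ := by
        rw [hsplit, mul_inv, hγ_def]
      have e5 : (1:ℝ) + 2*α*t = 1 + 2*(α*t) := by ring
      rw [e5] at *
      rw [e4] at step1
      nlinarith [step1, hcore]
    have hmul := mul_le_mul_of_nonneg_left main hk0.le
    nlinarith [hmul]
  constructor
  · have hmax : IsLocalMax g 0 := by
      filter_upwards [Metric.ball_mem_nhds (0 : EuclideanSpace ℝ (Fin d)) hρ] with a ha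
      exact key a (by simpa [dist_zero_right] using ha)
    have hf := hmax.fderiv_eq_zero
    simp [gradient, hf]
  · filter_upwards [Metric.ball_mem_nhds (0 : EuclideanSpace ℝ (Fin d)) hρ] with a ha
    exact key a (by simpa [dist_zero_right] using ha)
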